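/- In the one-period market with prices y ∈ L^0(ℝ^d, H) and Y ∈ L^0(ℝ^d, F), the no-arbitrage condition NA implies the AIP condition, but the converse fails: there exists a one-period market (with d = 1, trivial H, y = 0 and Y uniformly distributed on [0,1]) satisfying AIP in which NA fails. -/

import Mathlib

open MeasureTheory Set Filter
open scoped Classical

noncomputable section

/-- Scalar product on `ℝ^d`. -/
def dotp {d : ℕ} (a b : Fin d → ℝ) : ℝ := ∑ i, a i * b i

/-- `κ` is a regular version of the conditional law of `X` knowing the σ-algebra `H`. -/
structure CondLaw {Ω : Type*} (H : MeasurableSpace Ω) {mΩ : MeasurableSpace Ω}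
    (μ : Measure Ω) {E : Type*} [MeasurableSpace E] (X : Ω → E) (κ : Ω → Measure E) :
    Prop where
  isProb : ∀ ω, IsProbabilityMeasure (κ ω)
  meas : ∀ A : Set E, MeasurableSet A → Measurable[H] fun ω => κ ω A
  law : ∀ A : Set E, MeasurableSet A → ∀ B : Set Ω, MeasurableSet[H] B →
    ∫⁻ ω in B, κ ω A ∂μ = μ (B ∩ X ⁻¹' A)

/-- The support of the measure `κ ω`: the intersection of all closed sets of full
measure (for a regular conditional law this is the conditional support). -/
def condSupp {Ω E : Type*} [TopologicalSpace E] [MeasurableSpace E]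
    (κ : Ω → Measure E) (ω : Ω) : Set E :=
  ⋂₀ {A : Set E | IsClosed A ∧ κ ω A = 1}

/-- `γ` is (a version of) the conditional essential supremum of `X` knowing `H`. -/
def IsCondEssSup {Ω : Type*} (H : MeasurableSpace Ω) {mΩ : MeasurableSpace Ω}
    (μ : Measure Ω) (X : Ω → ℝ) (γ : Ω → EReal) : Prop :=
  Measurable[H] γ ∧ (∀ᵐ ω ∂μ, (X ω : EReal) ≤ γ ω) ∧
    ∀ ζ : Ω → EReal, Measurable[H] ζ → (∀ᵐ ω ∂μ, (X ω : EReal) ≤ ζ ω) →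
      ∀ᵐ ω ∂μ, γ ω ≤ ζ ω

/-- `γ` is (a version of) the conditional essential infimum of `X` knowing `H`. -/
def IsCondEssInf {Ω : Type*} (H : MeasurableSpace Ω) {mΩ : MeasurableSpace Ω}
    (μ : Measure Ω) (X : Ω → ℝ) (γ : Ω → EReal) : Prop :=
  Measurable[H] γ ∧ (∀ᵐ ω ∂μ, γ ω ≤ (X ω : EReal)) ∧
    ∀ ζ : Ω → EReal, Measurable[H] ζ → (∀ᵐ ω ∂μ, ζ ω ≤ (X ω : EReal)) →
      ∀ᵐ ω ∂μ, ζ ω ≤ γ ω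

/-- `p` is (a version of) the essential infimum of the family `S` of random variables. -/
def IsEssInfSet {Ω : Type*} {mΩ : MeasurableSpace Ω} (μ : Measure Ω)
    (S : Set (Ω → ℝ)) (p : Ω → EReal) : Prop :=
  Measurable[mΩ] p ∧ (∀ f ∈ S, ∀ᵐ ω ∂μ, p ω ≤ (f ω : EReal)) ∧
    ∀ ζ : Ω → EReal, Measurable[mΩ] ζ → (∀ f ∈ S, ∀ᵐ ω ∂μ, ζ ω ≤ (f ω : EReal)) →
      ∀ᵐ ω ∂μ, ζ ω ≤ p ω

/-- The set of super-hedging prices of the claim `Z` in the one-period market `(y, Y)`. -/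
def Prices {Ω : Type*} (H : MeasurableSpace Ω) {mΩ : MeasurableSpace Ω} (μ : Measure Ω)
    {d : ℕ} (y Y : Ω → Fin d → ℝ) (Z : Ω → ℝ) : Set (Ω → ℝ) :=
  {x | Measurable[H] x ∧ ∃ θ : Ω → Fin d → ℝ, Measurable[H] θ ∧
    ∀ᵐ ω ∂μ, Z ω ≤ x ω + dotp (θ ω) fun i => Y ω i - y ω i}

/-- One-dimensional version of `Prices`. -/
def Prices1 {Ω : Type*} (H : MeasurableSpace Ω) {mΩ : MeasurableSpace Ω} (μ : Measure Ω)
    (y Y : Ω → ℝ) (Z : Ω → ℝ) : Set (Ω → ℝ) :=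
  {x | Measurable[H] x ∧ ∃ θ : Ω → ℝ, Measurable[H] θ ∧
    ∀ᵐ ω ∂μ, Z ω ≤ x ω + θ ω * (Y ω - y ω)}

/-- One-period super-hedging prices of the zero claim in the market extended by the
additional asset `(pZ, Z)`. -/
def PricesExt {Ω : Type*} (H : MeasurableSpace Ω) {mΩ : MeasurableSpace Ω} (μ : Measure Ω)
    {d : ℕ} (y Y : Ω → Fin d → ℝ) (Z pZ : Ω → ℝ) : Set (Ω → ℝ) :=
  {x | Measurable[H] x ∧ ∃ α : Ω → ℝ, Measurable[H] α ∧ ∃ θ : Ω → Fin d → ℝ,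
    Measurable[H] θ ∧
    ∀ᵐ ω ∂μ, 0 ≤ x ω + α ω * (Z ω - pZ ω) + dotp (θ ω) fun i => Y ω i - y ω i}

/-- The function `f = -g + δ_{D}` of the paper, valued in `EReal`. -/
def fObj {Ω : Type*} {d : ℕ} (g : Ω → (Fin d → ℝ) → ℝ) (D : Ω → Set (Fin d → ℝ))
    (ω : Ω) (z : Fin d → ℝ) : EReal :=
  if z ∈ D ω then ((-(g ω z) : ℝ) : EReal) else ⊤

/-- Fenchel–Legendre conjugate of an `EReal`-valued function on `ℝ^d`. -/
def eConj {d : ℕ} (f : (Fin d → ℝ) → EReal) (x : Fin d → ℝ) : EReal :=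
  ⨆ z : Fin d → ℝ, ((dotp x z : ℝ) : EReal) - f z

/-- Convex-analytic indicator function `δ_s`. -/
def indicatorE {E : Type*} (s : Set E) (x : E) : EReal := if x ∈ s then 0 else ⊤

/-- Relative concave envelope of `g` with respect to `D`. -/
def concEnv {d : ℕ} (g : (Fin d → ℝ) → ℝ) (D : Set (Fin d → ℝ)) (x : Fin d → ℝ) : EReal :=
  ⨅ v ∈ {v : (Fin d → ℝ) → ℝ | ConcaveOn ℝ univ v ∧ ∀ z ∈ D, g z ≤ v z}, ((v x : ℝ) : EReal)

/-- Upper semicontinuous closure of an `EReal`-valued function. -/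
def usClosure {E : Type*} [TopologicalSpace E] (F : E → EReal) (x : E) : EReal :=
  Filter.limsup F (nhds x)

/-- The slope `θ^*` of Corollary 2.19, with the conventions of the paper. -/
def thetaStar (g : ℝ → ℝ) (M I : ℝ) (S : EReal) : ℝ :=
  if S = (I : EReal) then 0 else if S = ⊤ then M
  else (g S.toReal - g I) / (S.toReal - I)

/-- Multi-period super-hedging prices at time `t` of the claim `g` paid at time `T`. -/
def PricesMulti {Ω : Type*} {mΩ : MeasurableSpace Ω} (𝓕 : ℕ → MeasurableSpace Ω)
    (μ : Measure Ω) {d : ℕ} (S : ℕ → Ω → Fin d → ℝ) (t T : ℕ) (g : Ω → ℝ) :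
    Set (Ω → ℝ) :=
  {x | Measurable[𝓕 t] x ∧ ∃ θ : ℕ → Ω → Fin d → ℝ, (∀ u, Measurable[𝓕 u] (θ u)) ∧
    ∃ ε : Ω → ℝ, Measurable[𝓕 T] ε ∧ (∀ᵐ ω ∂μ, 0 ≤ ε ω) ∧
    ∀ᵐ ω ∂μ, x ω + (∑ u ∈ Finset.Icc (t+1) T,
      dotp (θ (u-1) ω) fun i => S u ω i - S (u-1) ω i) - ε ω = g ω}

/-- One-step super-hedging prices at time `t` of the (extended-real) claim `G`
paid at time `t+1`. -/
def OneStepPrices {Ω : Type*} {mΩ : MeasurableSpace Ω} (𝓕 : ℕ → MeasurableSpace Ω)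
    (μ : Measure Ω) {d : ℕ} (S : ℕ → Ω → Fin d → ℝ) (t : ℕ) (G : Ω → EReal) :
    Set (Ω → ℝ) :=
  {x | Measurable[𝓕 t] x ∧ ∃ θ : Ω → Fin d → ℝ, Measurable[𝓕 t] θ ∧
    ∀ᵐ ω ∂μ, G ω ≤ ((x ω + dotp (θ ω) fun i => S (t+1) ω i - S t ω i : ℝ) : EReal)}

/-- Multi-period super-hedging prices in the market extended by the additional asset `C`. -/
def PricesMultiExt {Ω : Type*} {mΩ : MeasurableSpace Ω} (𝓕 : ℕ → MeasurableSpace Ω)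
    (μ : Measure Ω) {d : ℕ} (S : ℕ → Ω → Fin d → ℝ) (C : ℕ → Ω → ℝ) (t T : ℕ)
    (g : Ω → ℝ) : Set (Ω → ℝ) :=
  {x | Measurable[𝓕 t] x ∧ ∃ θ : ℕ → Ω → Fin d → ℝ, (∀ u, Measurable[𝓕 u] (θ u)) ∧
    ∃ α : ℕ → Ω → ℝ, (∀ u, Measurable[𝓕 u] (α u)) ∧
    ∃ ε : Ω → ℝ, Measurable[𝓕 T] ε ∧ (∀ᵐ ω ∂μ, 0 ≤ ε ω) ∧
    ∀ᵐ ω ∂μ, x ω + (∑ u ∈ Finset.Icc (t+1) T,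
      ((dotp (θ (u-1) ω) fun i => S u ω i - S (u-1) ω i) +
        α (u-1) ω * (C u ω - C (u-1) ω))) - ε ω = g ω}

/-- The set `R_t^T` of claims super-replicable at zero cost, one-dimensional case. -/
def RsetM {Ω : Type*} {mΩ : MeasurableSpace Ω} (𝓕 : ℕ → MeasurableSpace Ω)
    (μ : Measure Ω) (S : ℕ → Ω → ℝ) (t T : ℕ) : Set (Ω → ℝ) :=
  {X | ∃ θ : ℕ → Ω → ℝ, (∀ u, Measurable[𝓕 u] (θ u)) ∧
    ∃ ε : Ω → ℝ, Measurable[𝓕 T] ε ∧ (∀ᵐ ω ∂μ, 0 ≤ ε ω) ∧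
    ∀ᵐ ω ∂μ, X ω = (∑ u ∈ Finset.Icc (t+1) T, θ (u-1) ω * (S u ω - S (u-1) ω)) - ε ω}

/-- Closure with respect to convergence in probability. -/
def closureP {Ω : Type*} {mΩ : MeasurableSpace Ω} (μ : Measure Ω) (A : Set (Ω → ℝ)) :
    Set (Ω → ℝ) :=
  {X | ∃ f : ℕ → Ω → ℝ, (∀ n, f n ∈ A) ∧ TendstoInMeasure μ f Filter.atTop X}

lemma eq_const_of_measurable_bot' {Ω : Type*} [Nonempty Ω] {β : Type*} [MeasurableSpace β]
    [MeasurableSingletonClass β] {f : Ω → β} (hf : Measurable[⊥] f) :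
    ∃ c, ∀ ω, f ω = c := by
  obtain ⟨ω₀⟩ := ‹Nonempty Ω›
  refine ⟨f ω₀, fun ω => ?_⟩
  have hs : MeasurableSet[⊥] (f ⁻¹' {f ω₀}) := hf (measurableSet_singleton _)
  rcases MeasurableSpace.measurableSet_bot_iff.1 hs with h | h
  · exact absurd (by simp [h] : (ω₀ : Ω) ∈ f ⁻¹' {f ω₀} → False) (by simp)
  · have : ω ∈ f ⁻¹' {f ω₀} := h ▸ mem_univ ω
    simpa using this

noncomputable def nu : Measure ℝ := volume.restrict (Set.Icc (0:ℝ) 1)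
noncomputable def Ymax : ℝ → ℝ := fun ω => max ω 0

lemma hYB : Measurable Ymax := measurable_id.max measurable_const

/-- the no-arbitrage condition NA implies AIP, and the converse fails:
there is a one-period market (`d = 1`, trivial initial σ-algebra, `y = 0`, `Y`
uniformly distributed on `[0,1]`) satisfying AIP in which NA fails. -/
theorem na_implies_aip_and_not_conversely :
    (∀ (Ω : Type) (H : MeasurableSpace Ω) [mΩ : MeasurableSpace Ω] (μ : Measure Ω),
      IsProbabilityMeasure μ → μ.IsComplete → H ≤ mΩ →
      (∀ s : Set Ω, μ s = 0 → MeasurableSet[H] s) →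
      ∀ (d : ℕ) (y Y : Ω → Fin d → ℝ), Measurable[H] y → Measurable[mΩ] Y →
      (∀ ω i, 0 ≤ y ω i) → (∀ ω i, 0 ≤ Y ω i) →
      -- NA
      (∀ θ : Ω → Fin d → ℝ, Measurable[H] θ →
        (∀ᵐ ω ∂μ, 0 ≤ dotp (θ ω) fun i => Y ω i - y ω i) →
        ∀ᵐ ω ∂μ, dotp (θ ω) (fun i => Y ω i - y ω i) = 0) →
      -- AIP
      ∀ p0 : Ω → EReal, IsEssInfSet μ (Prices H μ y Y fun _ => (0:ℝ)) p0 →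
        p0 =ᵐ[μ] fun _ => (0:EReal)) ∧
    (∃ (Ω : Type) (mΩ : MeasurableSpace Ω) (μ : Measure Ω),
      IsProbabilityMeasure μ ∧ μ.IsComplete ∧
      ∃ Y : Ω → ℝ, Measurable[mΩ] Y ∧ (∀ ω, 0 ≤ Y ω) ∧
        μ.map Y = volume.restrict (Set.Icc (0:ℝ) 1) ∧
        -- AIP holds (with trivial initial σ-algebra and y = 0)
        (∀ p0 : Ω → EReal,
          IsEssInfSet μ (Prices (⊥ : MeasurableSpace Ω) μ (fun _ _ => (0:ℝ))
            (fun ω (_ : Fin 1) => Y ω) fun _ => (0:ℝ)) p0 →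
          p0 =ᵐ[μ] fun _ => (0:EReal)) ∧
        -- NA fails
        ¬ (∀ θ : Ω → Fin 1 → ℝ, Measurable[(⊥ : MeasurableSpace Ω)] θ →
            (∀ᵐ ω ∂μ, 0 ≤ dotp (θ ω) fun _ => Y ω - 0) →
            ∀ᵐ ω ∂μ, dotp (θ ω) (fun _ => Y ω - 0) = 0)) := by
  constructor
  · intro Ω H mΩ μ hprob hcompl hle hnull d y Y hy hY hy0 hY0 hNA p0 hp0
    obtain ⟨hp0m, hp0le, hp0ge⟩ := hp0
    -- every superhedging price of 0 is a.e. nonnegative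
    have key : ∀ f ∈ Prices H μ y Y (fun _ => (0:ℝ)), ∀ᵐ ω ∂μ, (0:ℝ) ≤ f ω := by
      rintro f ⟨hfm, θ, hθm, hae⟩
      have hA : MeasurableSet[H] {ω | f ω < 0} :=
        measurableSet_lt hfm measurable_const
      set θ' : Ω → Fin d → ℝ := {ω | f ω < 0}.piecewise θ (fun _ _ => 0) with hθ'def
      have hθ'm : Measurable[H] θ' := Measurable.piecewise hA hθm measurable_const
      have h1 : ∀ᵐ ω ∂μ, 0 ≤ dotp (θ' ω) fun i => Y ω i - y ω i := by
        filter_upwards [hae] with ω hω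
        by_cases hmem : ω ∈ {ω | f ω < 0}
        · rw [hθ'def, Set.piecewise_eq_of_mem _ _ _ hmem]
          have : f ω < 0 := hmem
          linarith
        · rw [hθ'def, Set.piecewise_eq_of_notMem _ _ _ hmem]
          simp [dotp]
      have h2 := hNA θ' hθ'm h1
      filter_upwards [hae, h2] with ω hω h0
      by_contra hneg
      push_neg at hneg
      have hmem : ω ∈ {ω | f ω < 0} := hneg
      rw [hθ'def, Set.piecewise_eq_of_mem _ _ _ hmem] at h0
      rw [h0] at hω
      linarith
    -- 0 is a superhedging price
    have h0mem : (fun _ => (0:ℝ)) ∈ Prices H μ y Y (fun _ => (0:ℝ)) := by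
      refine ⟨measurable_const, fun _ _ => 0, measurable_const, ?_⟩
      filter_upwards with ω
      simp [dotp]
    have hle0 : ∀ᵐ ω ∂μ, p0 ω ≤ (0:EReal) := by
      have := hp0le _ h0mem
      simpa using this
    have hge0 : ∀ᵐ ω ∂μ, (0:EReal) ≤ p0 ω := by
      refine hp0ge (fun _ => (0:EReal)) measurable_const ?_
      intro f hf
      filter_upwards [key f hf] with ω hω
      exact_mod_cast hω
    filter_upwards [hle0, hge0] with ω h1 h2
    exact le_antisymm h1 h2
  ·
    refine ⟨NullMeasurableSpace ℝ nu, inferInstance, nu.completion, ?_, inferInstance,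
      Ymax, ?_, fun ω => le_max_right _ _, ?_, ?_, ?_⟩
    · constructor
      show nu Set.univ = 1
      simp [nu, Real.volume_Icc]
    · -- measurability of Y
      exact (hYB.nullMeasurable (μ := nu)).measurable'
    · -- law of Y is uniform
      refine Measure.ext fun A hA => ?_
      have hYm : Measurable[(inferInstance : MeasurableSpace (NullMeasurableSpace ℝ nu))] Ymax :=
        (hYB.nullMeasurable (μ := nu)).measurable'
      rw [Measure.map_apply hYm hA]
      show nu (Ymax ⁻¹' A) = nu A
      rw [nu, Measure.restrict_apply' measurableSet_Icc, Measure.restrict_apply' measurableSet_Icc]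
      congr 1
      ext ω
      simp only [Set.mem_inter_iff, Set.mem_preimage, Set.mem_Icc, Ymax]
      constructor
      · rintro ⟨h1, h2, h3⟩; exact ⟨by rwa [max_eq_left h2] at h1, h2, h3⟩
      · rintro ⟨h1, h2, h3⟩; exact ⟨by rwa [max_eq_left h2], h2, h3⟩
    · -- AIP
      haveI : Nonempty (NullMeasurableSpace ℝ nu) := ⟨(0:ℝ)⟩
      rintro p0 ⟨hp0m, hp0le, hp0ge⟩
      set S := Prices (⊥ : MeasurableSpace (NullMeasurableSpace ℝ nu)) nu.completion
        (fun _ _ => (0:ℝ)) (fun ω (_ : Fin 1) => Ymax ω) (fun _ => (0:ℝ)) with hS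
      have key : ∀ f ∈ S, ∀ᵐ ω ∂nu.completion, (0:ℝ) ≤ f ω := by
        rintro f ⟨hfm, θ, hθm, hae⟩
        obtain ⟨c, hc⟩ := eq_const_of_measurable_bot' hfm
        obtain ⟨a, ha⟩ := eq_const_of_measurable_bot'
          (show Measurable[⊥] fun ω => θ ω 0 from (measurable_pi_apply 0).comp hθm)
        suffices h : 0 ≤ c by
          filter_upwards with ω
          rw [hc ω]; exact h
        by_contra hneg
        push_neg at hneg
        set ε : ℝ := min 1 (-c / (|a| + 1)) with hεdef
        have hεpos : 0 < ε :=
          lt_min one_pos (div_pos (by linarith) (by positivity))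
        have hεone : ε ≤ 1 := min_le_left _ _
        have hεmul : ε * (|a| + 1) ≤ -c := by
          have := min_le_right 1 (-c / (|a| + 1))
          calc ε * (|a| + 1) ≤ (-c / (|a| + 1)) * (|a| + 1) := by
                apply mul_le_mul_of_nonneg_right this (by positivity)
            _ = -c := by field_simp
        rw [ae_iff] at hae
        have hnu : nu {ω : NullMeasurableSpace ℝ nu |
            ¬ (0:ℝ) ≤ f ω + dotp (θ ω) fun i => Ymax ω - 0} = 0 := hae
        have hsub : Set.Ico (0:ℝ) ε ⊆ ({ω : ℝ |
            ¬ (0:ℝ) ≤ f ω + dotp (θ ω) fun i => Ymax ω - 0} ∩ Set.Icc 0 1) := by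
          rintro ω ⟨h0ω, hωε⟩
          refine ⟨?_, h0ω, le_trans hωε.le hεone⟩
          show ¬ (0:ℝ) ≤ f ω + dotp (θ ω) fun i => Ymax ω - 0
          have hY : Ymax ω = ω := max_eq_left h0ω
          rw [hc ω]
          have hd : (dotp (θ ω) fun i => Ymax ω - 0) = a * ω := by
            simp [dotp, Fin.sum_univ_one, ha ω, hY]
          rw [hd]
          push_neg
          have h1 : a ≤ |a| := le_abs_self a
          have h2 : (0:ℝ) ≤ |a| := abs_nonneg a
          nlinarith [mul_nonneg (sub_nonneg.2 h1) h0ω, mul_nonneg h2 (sub_nonneg.2 hωε.le)]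
        rw [nu, Measure.restrict_apply' measurableSet_Icc] at hnu
        have h0 := measure_mono_null hsub hnu
        rw [Real.volume_Ico] at h0
        simp only [sub_zero, ENNReal.ofReal_eq_zero] at h0
        linarith
      have h0mem : (fun _ => (0:ℝ)) ∈ S := by
        refine ⟨measurable_const, fun _ _ => 0, measurable_const, ?_⟩
        filter_upwards with ω
        simp [dotp]
      have hle0 : ∀ᵐ ω ∂nu.completion, p0 ω ≤ (0:EReal) := by
        have := hp0le _ h0mem
        simpa using this
      have hge0 : ∀ᵐ ω ∂nu.completion, (0:EReal) ≤ p0 ω := by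
        refine hp0ge (fun _ => (0:EReal)) measurable_const ?_
        intro f hf
        filter_upwards [key f hf] with ω hω
        exact_mod_cast hω
      filter_upwards [hle0, hge0] with ω h1 h2
      exact le_antisymm h1 h2
    · -- NA fails
      intro hNA
      have h := hNA (fun _ _ => 1) measurable_const (by
        filter_upwards with ω
        simp [dotp, Fin.sum_univ_one, Ymax]
        exact le_max_right (α := ℝ) _ _)
      have h' : ∀ᵐ ω ∂nu.completion, Ymax ω = 0 := by
        filter_upwards [h] with ω hω
        simp [dotp, Fin.sum_univ_one] at hω
        exact hω
      have hmeas : nu.completion {ω : NullMeasurableSpace ℝ nu | ¬ Ymax ω = 0} = 0 := h'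
      have : nu {ω : ℝ | ¬ Ymax ω = 0} = 0 := hmeas
      have hsub : Set.Ioc (0:ℝ) 1 ⊆ {ω : ℝ | ¬ Ymax ω = 0} ∩ Set.Icc 0 1 := by
        rintro ω ⟨h1, h2⟩
        exact ⟨by simp [Ymax, max_eq_left h1.le]; linarith, h1.le, h2⟩
      rw [nu, Measure.restrict_apply' measurableSet_Icc] at this
      have := measure_mono_null hsub this
      simp [Real.volume_Ioc] at this
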